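/- Let K and N be positive integers, f₀, x₀, λ ∈ ℝ, f(t) = f₀ + λ·t, and let x : ℕ → ℝ satisfy x(0) = x₀ and x(t+1) = (K·f(t) + N·x(t))/(K+N) for all t ∈ ℕ. Then the increment x(t+1) − x(t) of the normal opinion converges, as t → ∞, to λ; that is, the normal group eventually moves at the same speed as the manipulative group. -/
import Mathlib


theorem hk_normal_speed_limit
    (K N : ℕ) (hK : 0 < K) (hN : 0 < N)
    (f₀ x₀ l : ℝ) (f : ℕ → ℝ) (hf : ∀ t : ℕ, f t = f₀ + l * (t : ℝ))
    (x : ℕ → ℝ) (hx0 : x 0 = x₀)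
    (hx : ∀ t : ℕ, x (t + 1) = ((K : ℝ) * f t + (N : ℝ) * x t) / ((K : ℝ) + (N : ℝ))) :
    Filter.Tendsto (fun t : ℕ => x (t + 1) - x t) Filter.atTop (nhds l) := by
  have hKp : (0:ℝ) < K := by exact_mod_cast hK
  have hNp : (0:ℝ) < N := by exact_mod_cast hN
  have hS : (0:ℝ) < (K:ℝ) + N := by linarith
  set r : ℝ := (N:ℝ) / ((K:ℝ) + N) with hr
  have hr0 : 0 ≤ r := by positivity
  have hr1 : r < 1 := by
    rw [hr, div_lt_one hS]; linarith
  have key : ∀ t : ℕ, x (t+1) - x t - l = r ^ t * (x 1 - x 0 - l) := by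
    intro t
    induction t with
    | zero => simp
    | succ n ih =>
      have h1 := hx (n+1)
      have h2 := hx n
      have hfn := hf n
      have hfn1 := hf (n+1)
      have : x (n+2) - x (n+1) - l = r * (x (n+1) - x n - l) := by
        rw [h1, h2, hfn, hfn1, hr]
        push_cast
        field_simp
        ring
      rw [this, ih, pow_succ]
      ring
  have htend : Filter.Tendsto (fun t : ℕ => r ^ t * (x 1 - x 0 - l) + l)
      Filter.atTop (nhds l) := by
    have := (tendsto_pow_atTop_nhds_zero_of_lt_one hr0 hr1).mul_const (x 1 - x 0 - l)
    simpa using this.add_const l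
  refine htend.congr (fun t => ?_)
  have := key t
  linarith
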